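/- Let s be weakly increasing with differences in {0,1}, s_{n+1} = s_n + 1. Every lattice point z ∈ A_n^s ∩ ℤ^{n+1} has nonnegative coordinates and coordinate sum s_{n+1}; moreover, if i+1 ∈ A(s) (i.e., s_{i+1} > s_i) and z_k ≠ 0 for some k ≤ i, then z_{i+1} ≥ 1. -/

import Mathlib

open Finset

/-- The polytope `A_n^s ⊂ ℝ^{n+1}`, modeled by functions `ℕ → ℝ` supported on `[1, n+1]`. -/
def Ans (n : ℕ) (s : ℕ → ℤ) : Set (ℕ → ℝ) :=
  {y | (∀ i : ℕ, (i = 0 ∨ n + 1 < i) → y i = 0) ∧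
       (∀ j ∈ Finset.Icc 1 n, 0 ≤ ∑ i ∈ Finset.Icc 1 j, y i ∧
          ∑ i ∈ Finset.Icc 1 j, y i ≤ (s j : ℝ)) ∧
       (∀ j ∈ Finset.Icc 1 (n - 1),
          0 ≤ ((s (j + 1) - s j : ℤ) : ℝ) * ∑ i ∈ Finset.Icc 1 j, y i ∧
          ((s (j + 1) - s j : ℤ) : ℝ) * ∑ i ∈ Finset.Icc 1 j, y i ≤ (s j : ℝ) * y (j + 1)) ∧
       ∑ i ∈ Finset.Icc 1 (n + 1), y i = (s (n + 1) : ℝ)}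

theorem lattice_points_of_Ans_basic_properties
    (n : ℕ) (hn : 0 < n) (s : ℕ → ℤ)
    (hpos : ∀ i ∈ Finset.Icc 1 n, 0 < s i)
    (hdiff : ∀ i ∈ Finset.Icc 1 (n - 1), s (i + 1) - s i = 0 ∨ s (i + 1) - s i = 1)
    (hsn1 : s (n + 1) = s n + 1)
    (z : ℕ → ℤ) (hz : (fun i => (z i : ℝ)) ∈ Ans n s) :
    (∀ i : ℕ, 0 ≤ z i) ∧
    (∑ i ∈ Finset.Icc 1 (n + 1), z i = s (n + 1)) ∧
    (∀ i ∈ Finset.Icc 1 n, s i < s (i + 1) →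
      (∃ k ∈ Finset.Icc 1 i, z k ≠ 0) → 1 ≤ z (i + 1)) := by
  obtain ⟨h0, hP, hQ, hsum⟩ := hz
  beta_reduce at h0 hP hQ hsum
  have hz0 : ∀ i, (i = 0 ∨ n + 1 < i) → z i = 0 := by
    intro i hi; exact_mod_cast h0 i hi
  have hsumZ : ∑ i ∈ Finset.Icc 1 (n + 1), z i = s (n + 1) := by exact_mod_cast hsum
  have hPZ : ∀ j ∈ Finset.Icc 1 n,
      0 ≤ ∑ i ∈ Finset.Icc 1 j, z i ∧ ∑ i ∈ Finset.Icc 1 j, z i ≤ s j := by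
    intro j hj
    obtain ⟨h1, h2⟩ := hP j hj
    exact ⟨by exact_mod_cast h1, by exact_mod_cast h2⟩
  have hQZ : ∀ j ∈ Finset.Icc 1 (n - 1),
      0 ≤ (s (j + 1) - s j) * ∑ i ∈ Finset.Icc 1 j, z i ∧
      (s (j + 1) - s j) * ∑ i ∈ Finset.Icc 1 j, z i ≤ s j * z (j + 1) := by
    intro j hj
    obtain ⟨h1, h2⟩ := hQ j hj
    exact ⟨by exact_mod_cast h1, by exact_mod_cast h2⟩
  have hnmem : n ∈ Finset.Icc 1 n := by simp only [Finset.mem_Icc]; omega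
  have hPn := (hPZ n hnmem).2
  have hsplit : ∑ i ∈ Finset.Icc 1 (n + 1), z i
      = (∑ i ∈ Finset.Icc 1 n, z i) + z (n + 1) :=
    Finset.sum_Icc_succ_top (by omega) _
  have hzn1 : 1 ≤ z (n + 1) := by omega
  have hnn : ∀ i, 0 ≤ z i := by
    intro i
    rcases Nat.eq_zero_or_pos i with rfl | hi1
    · simp [hz0 0 (Or.inl rfl)]
    rcases lt_or_ge (n + 1) i with h | h
    · simp [hz0 i (Or.inr h)]
    rcases eq_or_lt_of_le h with rfl | hlt
    · omega
    have hin : i ≤ n := by omega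
    rcases eq_or_lt_of_le (show 1 ≤ i from hi1) with rfl | hi2
    · have := (hPZ 1 (by simp only [Finset.mem_Icc]; omega)).1
      simpa using this
    -- 2 ≤ i ≤ n, write i = j + 1 with j ∈ Icc 1 (n-1)
    obtain ⟨j, rfl⟩ : ∃ j, i = j + 1 := ⟨i - 1, by omega⟩
    have hjmem : j ∈ Finset.Icc 1 (n - 1) := by
      simp only [Finset.mem_Icc]; omega
    obtain ⟨hq1, hq2⟩ := hQZ j hjmem
    have hsj : 0 < s j := hpos j (by simp only [Finset.mem_Icc]; omega)
    have hPj : 0 ≤ ∑ i ∈ Finset.Icc 1 j, z i :=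
      (hPZ j (by simp only [Finset.mem_Icc]; omega)).1
    rcases hdiff j hjmem with hd | hd
    · rw [hd] at hq2
      nlinarith
    · rw [hd, one_mul] at hq2
      nlinarith
  refine ⟨hnn, hsumZ, ?_⟩
  intro i hi hlt ⟨k, hk, hkne⟩
  simp only [Finset.mem_Icc] at hi hk
  have hzk : 1 ≤ z k := by have := hnn k; omega
  have hPi : 1 ≤ ∑ m ∈ Finset.Icc 1 i, z m := by
    have hle : z k ≤ ∑ m ∈ Finset.Icc 1 i, z m :=
      Finset.single_le_sum (fun m _ => hnn m) (by simp only [Finset.mem_Icc]; omega)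
    omega
  rcases eq_or_lt_of_le hi.2 with rfl | hilt
  · exact hzn1
  · have hjmem : i ∈ Finset.Icc 1 (n - 1) := by
      simp only [Finset.mem_Icc]; omega
    have hq2 := (hQZ i hjmem).2
    have hd : s (i + 1) - s i = 1 := by
      rcases hdiff i hjmem with h | h <;> omega
    rw [hd, one_mul] at hq2
    have hsi : 0 < s i := hpos i (by simp only [Finset.mem_Icc]; omega)
    nlinarith
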